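/- Let ρ and ρ_E be d×d complex density matrices, let λ_min denote the smallest eigenvalue of ρ_E, let p₀, p₁ ≥ 0 with p₀ + p₁ = 1 and p₀ ≥ p₁, and let η ∈ [0,1]. Set γ := p₁(1−η) − p₀. If p₁η + γ·λ_min ≤ 0, then the matrix Ω_c := p₁η·ρ + γ·ρ_E is negative semidefinite and its trace norm equals p₀ − p₁; consequently P_err = (1 − ‖Ω_c‖₁)/2 equals p₁, for every (pure or mixed) signal state ρ. -/

import Mathlib

open Matrix BigOperators Kronecker ComplexOrder

/-- The trace norm of a Hermitian matrix: the sum of the absolute values of its eigenvalues. -/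
noncomputable def traceNorm {n : Type*} [Fintype n] [DecidableEq n]
    {A : Matrix n n ℂ} (hA : A.IsHermitian) : ℝ :=
  ∑ i, |hA.eigenvalues i|

section Aux

variable {n : Type*} [Fintype n] [DecidableEq n]

lemma real_smul_matrix (c : ℝ) (A : Matrix n n ℂ) : c • A = (c : ℂ) • A := by
  ext i j; simp [Complex.real_smul]

lemma real_smul_psd {A : Matrix n n ℂ} (hA : A.PosSemidef) {c : ℝ} (hc : 0 ≤ c) :
    (c • A).PosSemidef := by
  rw [real_smul_matrix]
  refine Matrix.PosSemidef.of_dotProduct_mulVec_nonneg ?_ ?_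
  · show ((c : ℂ) • A)ᴴ = (c : ℂ) • A
    rw [Matrix.conjTranspose_smul, hA.1.eq]
    simp
  · intro x
    rw [Matrix.smul_mulVec, _root_.dotProduct_smul]
    exact smul_nonneg (by exact_mod_cast hc) (hA.dotProduct_mulVec_nonneg x)

lemma sub_smul_one_psd {A : Matrix n n ℂ} (hA : A.IsHermitian) (c : ℝ)
    (h : ∀ i, c ≤ hA.eigenvalues i) : (A - c • (1 : Matrix n n ℂ)).PosSemidef := by
  have hU : (hA.eigenvectorUnitary : Matrix n n ℂ) * star (hA.eigenvectorUnitary : Matrix n n ℂ)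
      = 1 := Matrix.mem_unitaryGroup_iff.mp hA.eigenvectorUnitary.2
  have key : A - c • (1 : Matrix n n ℂ) =
      (hA.eigenvectorUnitary : Matrix n n ℂ) *
        diagonal (fun i => ((hA.eigenvalues i - c : ℝ) : ℂ)) *
        star (hA.eigenvectorUnitary : Matrix n n ℂ) := by
    have hdiag : diagonal (fun i => ((hA.eigenvalues i - c : ℝ) : ℂ)) =
        diagonal (RCLike.ofReal ∘ hA.eigenvalues) - c • (1 : Matrix n n ℂ) := by
      ext i j
      rcases eq_or_ne i j with rfl | hne
      · simp [Complex.real_smul]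
      · simp [Matrix.diagonal_apply_ne _ hne, Matrix.one_apply_ne hne]
    rw [hdiag, Matrix.mul_sub, Matrix.sub_mul, Matrix.mul_smul, Matrix.smul_mul, mul_one, hU]
    have hs := hA.spectral_theorem
    simp only [Unitary.conjStarAlgAut_apply, Unitary.coe_star] at hs
    rw [← hs]
  rw [key]
  refine (posSemidef_diagonal_iff.mpr fun i => ?_).mul_mul_conjTranspose_same _
  exact_mod_cast sub_nonneg.mpr (h i)

lemma smul_one_sub_psd {A : Matrix n n ℂ} (hA : A.IsHermitian) (c : ℝ)
    (h : ∀ i, hA.eigenvalues i ≤ c) : (c • (1 : Matrix n n ℂ) - A).PosSemidef := by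
  have hU : (hA.eigenvectorUnitary : Matrix n n ℂ) * star (hA.eigenvectorUnitary : Matrix n n ℂ)
      = 1 := Matrix.mem_unitaryGroup_iff.mp hA.eigenvectorUnitary.2
  have key : c • (1 : Matrix n n ℂ) - A =
      (hA.eigenvectorUnitary : Matrix n n ℂ) *
        diagonal (fun i => ((c - hA.eigenvalues i : ℝ) : ℂ)) *
        star (hA.eigenvectorUnitary : Matrix n n ℂ) := by
    have hdiag : diagonal (fun i => ((c - hA.eigenvalues i : ℝ) : ℂ)) =
        c • (1 : Matrix n n ℂ) - diagonal (RCLike.ofReal ∘ hA.eigenvalues) := by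
      ext i j
      rcases eq_or_ne i j with rfl | hne
      · simp [Complex.real_smul]
      · simp [Matrix.diagonal_apply_ne _ hne, Matrix.one_apply_ne hne]
    rw [hdiag, Matrix.mul_sub, Matrix.sub_mul, Matrix.mul_smul, Matrix.smul_mul, mul_one, hU]
    have hs := hA.spectral_theorem
    simp only [Unitary.conjStarAlgAut_apply, Unitary.coe_star] at hs
    rw [← hs]
  rw [key]
  refine (posSemidef_diagonal_iff.mpr fun i => ?_).mul_mul_conjTranspose_same _
  exact_mod_cast sub_nonneg.mpr (h i)

lemma sum_eig_eq_trace {A : Matrix n n ℂ} (hA : A.IsHermitian) :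
    (∑ i, (hA.eigenvalues i : ℂ)) = A.trace := by
  conv_rhs => rw [hA.spectral_theorem, Unitary.conjStarAlgAut_apply]
  rw [Matrix.trace_mul_cycle,
    Matrix.mem_unitaryGroup_iff'.mp hA.eigenvectorUnitary.2, Matrix.one_mul,
    Matrix.trace_diagonal]
  rfl

end Aux

/-- **Region II, conventional illumination.** If `p₀ ≥ p₁` and
`p₁η + γ·λ_min ≤ 0` where `γ := p₁(1-η) - p₀` and `λ_min` is the smallest eigenvalue of `ρ_E`,
then `Ω_c = p₁η·ρ + γ·ρ_E` is negative semidefinite (i.e. `-Ω_c` is positive semidefinite),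
its trace norm equals `p₀ - p₁`, and the minimum-error probability `(1 - ‖Ω_c‖₁)/2`
equals `p₁`, for every (pure or mixed) signal state `ρ`. -/
theorem region_II_conventional {d : ℕ}
    (ρ ρE : Matrix (Fin d) (Fin d) ℂ)
    (hρ : ρ.PosSemidef) (hρtr : ρ.trace = 1)
    (hE : ρE.PosSemidef) (hEtr : ρE.trace = 1)
    (lamMin : ℝ) (hmin_le : ∀ i, lamMin ≤ hE.1.eigenvalues i)
    (hmin_mem : ∃ i, hE.1.eigenvalues i = lamMin)
    (p₀ p₁ η : ℝ) (hp₀ : 0 ≤ p₀) (hp₁ : 0 ≤ p₁) (hsum : p₀ + p₁ = 1)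
    (hp : p₁ ≤ p₀) (hη₀ : 0 ≤ η) (hη₁ : η ≤ 1)
    (hcond : p₁ * η + (p₁ * (1 - η) - p₀) * lamMin ≤ 0)
    (hΩ : ((p₁ * η) • ρ + (p₁ * (1 - η) - p₀) • ρE).IsHermitian) :
    (-((p₁ * η) • ρ + (p₁ * (1 - η) - p₀) • ρE)).PosSemidef ∧
      traceNorm hΩ = p₀ - p₁ ∧
      (1 - traceNorm hΩ) / 2 = p₁ := by
  set a : ℝ := p₁ * η with ha_def
  set γ : ℝ := p₁ * (1 - η) - p₀ with hγ_def
  have ha : 0 ≤ a := mul_nonneg hp₁ hη₀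
  have hγ : γ ≤ 0 := by
    have : p₁ * (1 - η) ≤ p₁ := by nlinarith
    simp only [hγ_def]; linarith
  -- eigenvalues of ρ are ≤ 1
  have hρ_sum : (∑ i, hρ.1.eigenvalues i) = 1 := by
    have h := congrArg Complex.re (sum_eig_eq_trace hρ.1)
    simpa [hρtr] using h
  have hρ_le_one : ∀ i, hρ.1.eigenvalues i ≤ 1 := by
    intro i
    rw [← hρ_sum]
    exact Finset.single_le_sum (fun j _ => hρ.eigenvalues_nonneg j) (Finset.mem_univ i)
  -- pieces
  have h1 : ((1 : ℝ) • (1 : Matrix (Fin d) (Fin d) ℂ) - ρ).PosSemidef :=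
    smul_one_sub_psd hρ.1 1 hρ_le_one
  have h2 : (ρE - lamMin • (1 : Matrix (Fin d) (Fin d) ℂ)).PosSemidef :=
    sub_smul_one_psd hE.1 lamMin hmin_le
  have h3 : ((1 : Matrix (Fin d) (Fin d) ℂ)).PosSemidef := Matrix.PosSemidef.one
  have key : -(a • ρ + γ • ρE) =
      (-γ) • (ρE - lamMin • (1 : Matrix (Fin d) (Fin d) ℂ)) +
      a • ((1 : ℝ) • (1 : Matrix (Fin d) (Fin d) ℂ) - ρ) +
      (-(a + γ * lamMin)) • (1 : Matrix (Fin d) (Fin d) ℂ) := by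
    module
  have hPSD : (-(a • ρ + γ • ρE)).PosSemidef := by
    rw [key]
    exact (((real_smul_psd h2 (neg_nonneg.mpr hγ)).add
      (real_smul_psd h1 ha)).add (real_smul_psd h3 (by linarith)))
  refine ⟨hPSD, ?_, ?_⟩
  · -- trace norm
    have heig : ∀ i, hΩ.eigenvalues i ≤ 0 := by
      intro i
      rw [hΩ.eigenvalues_eq i]
      have h := hPSD.dotProduct_mulVec_nonneg (⇑(hΩ.eigenvectorBasis i))
      rw [Matrix.neg_mulVec, _root_.dotProduct_neg] at h
      have := (Complex.le_def.mp h).1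
      simpa using this
    have htr : Complex.re ((a • ρ + γ • ρE) : Matrix (Fin d) (Fin d) ℂ).trace = a + γ := by
      rw [Matrix.trace_add, real_smul_matrix, real_smul_matrix, Matrix.trace_smul,
        Matrix.trace_smul, hρtr, hEtr]
      simp
    have hsumeig : (∑ i, hΩ.eigenvalues i) = a + γ := by
      have h := congrArg Complex.re (sum_eig_eq_trace hΩ)
      rw [htr] at h
      simpa using h
    have : traceNorm hΩ = -(∑ i, hΩ.eigenvalues i) := by
      rw [traceNorm, ← Finset.sum_neg_distrib]
      exact Finset.sum_congr rfl fun i _ => abs_of_nonpos (heig i)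
    rw [this, hsumeig]
    simp only [ha_def, hγ_def]
    ring
  · -- P_err
    have h2' : traceNorm hΩ = p₀ - p₁ := by
      -- reuse: recompute as above
      have heig : ∀ i, hΩ.eigenvalues i ≤ 0 := by
        intro i
        rw [hΩ.eigenvalues_eq i]
        have h := hPSD.dotProduct_mulVec_nonneg (⇑(hΩ.eigenvectorBasis i))
        rw [Matrix.neg_mulVec, _root_.dotProduct_neg] at h
        have := (Complex.le_def.mp h).1
        simpa using this
      have htr : Complex.re ((a • ρ + γ • ρE) : Matrix (Fin d) (Fin d) ℂ).trace = a + γ := by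
        rw [Matrix.trace_add, real_smul_matrix, real_smul_matrix, Matrix.trace_smul,
          Matrix.trace_smul, hρtr, hEtr]
        simp
      have hsumeig : (∑ i, hΩ.eigenvalues i) = a + γ := by
        have h := congrArg Complex.re (sum_eig_eq_trace hΩ)
        rw [htr] at h
        simpa using h
      have : traceNorm hΩ = -(∑ i, hΩ.eigenvalues i) := by
        rw [traceNorm, ← Finset.sum_neg_distrib]
        exact Finset.sum_congr rfl fun i _ => abs_of_nonpos (heig i)
      rw [this, hsumeig]
      simp only [ha_def, hγ_def]
      ring
    rw [h2']
    linarith
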